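/- Let g be a C² function on an open set of ℝⁿ with D²g ≥ K·I for some K > 0, twice differentiable at x₀ with invertible Hessian. Then the Legendre transform g* is twice differentiable at ȳ₀ = Dg(x₀), and D²g*(ȳ₀) = (D²g(x₀))⁻¹. In particular if D²g ≥ K·I everywhere then D²g* ≤ K⁻¹·I on the image of Dg. -/

import Mathlib

open scoped RealInnerProductSpace
open Filter Topology
set_option linter.unusedSectionVars false

variable {E : Type*} [NormedAddCommGroup E] [InnerProductSpace ℝ E]
  [CompleteSpace E] [FiniteDimensional ℝ E]

section aux
variable {Ω : Set E} (hΩo : IsOpen Ω) (hΩc : Convex ℝ Ω)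
  {g : E → ℝ} {K : ℝ} (hK : 0 < K) (hg : ContDiffOn ℝ 2 g Ω)
  (hlower : ∀ x ∈ Ω, ∀ v : E, K * ‖v‖ ^ 2 ≤ ⟪fderiv ℝ (gradient g) x v, v⟫)
include hΩo hg

theorem aux_contDiffAt_grad {x : E} (hx : x ∈ Ω) : ContDiffAt ℝ 1 (gradient g) x := by
  have hgx : ContDiffAt ℝ 2 g x := hg.contDiffAt (hΩo.mem_nhds hx)
  have h1 : ContDiffAt ℝ 1 (fderiv ℝ g) x := hgx.fderiv_right (m := 1) (by norm_num)
  exact ((InnerProductSpace.toDual ℝ E).symm.toContinuousLinearEquiv.contDiff.contDiffAt).comp x h1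

theorem aux_hasFDerivAt_grad {x : E} (hx : x ∈ Ω) :
    HasFDerivAt (gradient g) (fderiv ℝ (gradient g) x) x :=
  ((aux_contDiffAt_grad hΩo hg hx).differentiableAt one_ne_zero).hasFDerivAt

theorem aux_hasGradientAt {x : E} (hx : x ∈ Ω) : HasGradientAt g (gradient g x) x := by
  have hgx : ContDiffAt ℝ 2 g x := hg.contDiffAt (hΩo.mem_nhds hx)
  exact (hgx.differentiableAt (by norm_num)).hasGradientAt

include hΩc hK hlower

/-- strong monotonicity of the gradient map -/
theorem aux_mono {a b : E} (ha : a ∈ Ω) (hb : b ∈ Ω) :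
    K * ‖b - a‖ ^ 2 ≤ ⟪gradient g b - gradient g a, b - a⟫ := by
  set d := b - a with hd
  have hseg : ∀ t : ℝ, t ∈ Set.Icc (0:ℝ) 1 → a + t • d ∈ Ω := fun t ht =>
    hΩc.add_smul_sub_mem ha hb ht
  set χ : ℝ → ℝ := fun t => ⟪gradient g (a + t • d), d⟫ - t * (K * ‖d‖ ^ 2) with hχ
  have hderiv : ∀ t ∈ Set.Icc (0:ℝ) 1,
      HasDerivAt χ (⟪fderiv ℝ (gradient g) (a + t • d) d, d⟫ - K * ‖d‖ ^ 2) t := by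
    intro t ht
    have hγ : HasDerivAt (fun t : ℝ => a + t • d) d t := by
      simpa using ((hasDerivAt_id t).smul_const d).const_add a
    have hF : HasDerivAt (fun t : ℝ => gradient g (a + t • d))
        (fderiv ℝ (gradient g) (a + t • d) d) t :=
      (aux_hasFDerivAt_grad hΩo hg (hseg t ht)).comp_hasDerivAt (f := fun t : ℝ => a + t • d) t hγ
    have hi := hF.inner ℝ (hasDerivAt_const t d)
    have h2 : HasDerivAt (fun t : ℝ => t * (K * ‖d‖ ^ 2)) (K * ‖d‖ ^ 2) t :=
      hasDerivAt_mul_const _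
    have h := hi.sub h2
    simp [-inner_gradient_left] at h
    exact h
  have hmono : MonotoneOn χ (Set.Icc (0:ℝ) 1) := by
    apply monotoneOn_of_deriv_nonneg (convex_Icc 0 1)
    · exact fun t ht => ((hderiv t ht).continuousAt.continuousWithinAt)
    · intro t ht
      rw [interior_Icc] at ht
      exact ((hderiv t (Set.mem_Icc_of_Ioo ht)).hasDerivWithinAt.differentiableWithinAt)
    · intro t ht
      rw [interior_Icc] at ht
      rw [((hderiv t (Set.mem_Icc_of_Ioo ht)).deriv)]
      have := hlower _ (hseg t (Set.mem_Icc_of_Ioo ht)) d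
      linarith
  have h01 := hmono (Set.left_mem_Icc.2 one_pos.le) (Set.right_mem_Icc.2 one_pos.le) one_pos.le
  simp only [hχ, zero_smul, add_zero, one_smul, zero_mul, sub_zero, one_mul] at h01
  have hab : a + d = b := by rw [hd]; abel
  rw [hab] at h01
  have : ⟪gradient g b, d⟫ - ⟪gradient g a, d⟫ ≥ K * ‖d‖ ^ 2 := by linarith
  rw [inner_sub_left]
  linarith
end aux

section sub
variable {Ω : Set E} (hΩo : IsOpen Ω) (hΩc : Convex ℝ Ω)
  {g : E → ℝ} {K : ℝ} (hK : 0 < K) (hg : ContDiffOn ℝ 2 g Ω)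
  (hlower : ∀ x ∈ Ω, ∀ v : E, K * ‖v‖ ^ 2 ≤ ⟪fderiv ℝ (gradient g) x v, v⟫)
include hΩo hΩc hK hg hlower

/-- subgradient inequality -/
theorem aux_subgrad {a b : E} (ha : a ∈ Ω) (hb : b ∈ Ω) :
    g a + ⟪gradient g a, b - a⟫ ≤ g b := by
  set d := b - a with hd
  have hseg : ∀ t : ℝ, t ∈ Set.Icc (0:ℝ) 1 → a + t • d ∈ Ω := fun t ht =>
    hΩc.add_smul_sub_mem ha hb ht
  set ψ : ℝ → ℝ := fun t => g (a + t • d) - t * ⟪gradient g a, d⟫ with hψ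
  have hderiv : ∀ t ∈ Set.Icc (0:ℝ) 1,
      HasDerivAt ψ (⟪gradient g (a + t • d), d⟫ - ⟪gradient g a, d⟫) t := by
    intro t ht
    have hγ : HasDerivAt (fun t : ℝ => a + t • d) d t := by
      simpa using ((hasDerivAt_id t).smul_const d).const_add a
    have hgd : HasFDerivAt g ((InnerProductSpace.toDual ℝ E) (gradient g (a + t • d)))
        (a + t • d) := aux_hasGradientAt hΩo hg (hseg t ht)
    have h1 : HasDerivAt (fun t : ℝ => g (a + t • d)) (⟪gradient g (a + t • d), d⟫) t := by
      have h := hgd.comp_hasDerivAt (f := fun t : ℝ => a + t • d) t hγ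
      simp at h ⊢
      exact h
    exact h1.sub (hasDerivAt_mul_const _)
  have hmono : MonotoneOn ψ (Set.Icc (0:ℝ) 1) := by
    apply monotoneOn_of_deriv_nonneg (convex_Icc 0 1)
    · exact fun t ht => ((hderiv t ht).continuousAt.continuousWithinAt)
    · intro t ht
      rw [interior_Icc] at ht
      exact ((hderiv t (Set.mem_Icc_of_Ioo ht)).hasDerivWithinAt.differentiableWithinAt)
    · intro t ht
      rw [interior_Icc] at ht
      rw [((hderiv t (Set.mem_Icc_of_Ioo ht)).deriv)]
      have hmem := hseg t (Set.mem_Icc_of_Ioo ht)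
      have hm := aux_mono hΩo hΩc hK hg hlower ha hmem
      have he : (a + t • d) - a = t • d := by abel
      rw [he, inner_sub_left, real_inner_smul_right, real_inner_smul_right] at hm
      have hn : 0 ≤ K * ‖t • d‖ ^ 2 := by positivity
      nlinarith [ht.1]
  have h01 := hmono (Set.left_mem_Icc.2 one_pos.le) (Set.right_mem_Icc.2 one_pos.le) one_pos.le
  simp only [hψ, zero_smul, add_zero, one_smul, zero_mul, sub_zero, one_mul] at h01
  have hab : a + d = b := by rw [hd]; abel
  rw [hab] at h01
  linarith
end sub

section leg
variable {Ω : Set E} (hΩo : IsOpen Ω) (hΩc : Convex ℝ Ω) (hne : Ω.Nonempty)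
  {g : E → ℝ} {K : ℝ} (hK : 0 < K) (hg : ContDiffOn ℝ 2 g Ω)
  (hlower : ∀ x ∈ Ω, ∀ v : E, K * ‖v‖ ^ 2 ≤ ⟪fderiv ℝ (gradient g) x v, v⟫)
  {gstar : E → ℝ}
  (hgstar : ∀ y, gstar y = ⨆ x : Ω, (⟪(x : E), y⟫ - g x))
include hΩo hΩc hne hK hg hlower hgstar

theorem aux_gstar_val {x : E} (hx : x ∈ Ω) :
    gstar (gradient g x) = ⟪x, gradient g x⟫ - g x := by
  have hne' : Nonempty Ω := hne.to_subtype
  rw [hgstar]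
  have hub : ∀ z : Ω, ⟪(z : E), gradient g x⟫ - g z ≤ ⟪x, gradient g x⟫ - g x := by
    rintro ⟨z, hz⟩
    have := aux_subgrad hΩo hΩc hK hg hlower hx hz
    have h2 : ⟪gradient g x, z - x⟫ = ⟪z, gradient g x⟫ - ⟪x, gradient g x⟫ := by
      rw [inner_sub_right, real_inner_comm]
      congr 1
      exact real_inner_comm _ _
    simp only at this ⊢
    linarith [this, h2.symm.le]
  apply le_antisymm
  · exact ciSup_le hub
  · exact le_ciSup ⟨_, Set.forall_mem_range.2 hub⟩ (⟨x, hx⟩ : Ω)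
end leg

theorem aux_equiv {K : ℝ} (hK : 0 < K) (B : E →L[ℝ] E)
    (hB : ∀ v : E, K * ‖v‖ ^ 2 ≤ ⟪B v, v⟫) :
    ∃ Be : E ≃L[ℝ] E, (Be : E →L[ℝ] E) = B := by
  have hinj : Function.Injective B := by
    intro u v huv
    have h0 : B (u - v) = 0 := by rw [map_sub, huv, sub_self]
    have h1 := hB (u - v)
    rw [h0, inner_zero_left] at h1
    have : ‖u - v‖ ^ 2 ≤ 0 := by nlinarith
    have : u - v = 0 := by
      rw [← norm_eq_zero]
      nlinarith [norm_nonneg (u - v)]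
    exact sub_eq_zero.mp this
  have hsurj : Function.Surjective B :=
    LinearMap.injective_iff_surjective.mp hinj
  exact ⟨((LinearEquiv.ofBijective (B : E →ₗ[ℝ] E) ⟨hinj, hsurj⟩).toContinuousLinearEquiv), by
    ext v; rfl⟩

section main
variable {Ω : Set E} (hΩo : IsOpen Ω) (hΩc : Convex ℝ Ω) (hne : Ω.Nonempty)
  {g : E → ℝ} {K : ℝ} (hK : 0 < K) (hg : ContDiffOn ℝ 2 g Ω)
  (hlower : ∀ x ∈ Ω, ∀ v : E, K * ‖v‖ ^ 2 ≤ ⟪fderiv ℝ (gradient g) x v, v⟫)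
  {gstar : E → ℝ}
  (hgstar : ∀ y, gstar y = ⨆ x : Ω, (⟪(x : E), y⟫ - g x))
include hΩo hΩc hne hK hg hlower hgstar

theorem aux_quad {x : E} (hx : x ∈ Ω) :
    ∀ᶠ y in 𝓝 (gradient g x),
      |gstar y - gstar (gradient g x) - ⟪x, y - gradient g x⟫| ≤ K⁻¹ * ‖y - gradient g x‖ ^ 2 := by
  obtain ⟨Be, hBe⟩ := aux_equiv hK (fderiv ℝ (gradient g) x) (hlower x hx)
  have hstrict : HasStrictFDerivAt (gradient g) (Be : E →L[ℝ] E) x := by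
    rw [hBe]
    exact (aux_contDiffAt_grad hΩo hg hx).hasStrictFDerivAt one_ne_zero
  set y₀ := gradient g x with hy₀
  set finv := hstrict.localInverse (gradient g) Be x with hfinv
  have hev1 : ∀ᶠ y in 𝓝 y₀, gradient g (finv y) = y := hstrict.eventually_right_inverse
  have hfx : finv y₀ = x := hstrict.localInverse_apply_image
  have hev2 : ∀ᶠ y in 𝓝 y₀, finv y ∈ Ω := by
    have hc : ContinuousAt finv y₀ := hstrict.localInverse_continuousAt
    have := hc.preimage_mem_nhds (hΩo.mem_nhds (by rw [hfx]; exact hx))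
    filter_upwards [this] with y hy using hy
  filter_upwards [hev1, hev2] with y h1 h2
  set z := finv y with hz
  have hgy : gstar y = ⟪z, y⟫ - g z := by
    conv_lhs => rw [← h1]
    rw [aux_gstar_val hΩo hΩc hne hK hg hlower hgstar h2, h1]
  have hgy0 : gstar y₀ = ⟪x, y₀⟫ - g x := aux_gstar_val hΩo hΩc hne hK hg hlower hgstar hx
  have hE : gstar y - gstar y₀ - ⟪x, y - y₀⟫ = ⟪z - x, y⟫ - (g z - g x) := by
    rw [hgy, hgy0, inner_sub_right, inner_sub_left]; ring
  have hlow2 := aux_subgrad hΩo hΩc hK hg hlower h2 hx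
  have hup2 := aux_subgrad hΩo hΩc hK hg hlower hx h2
  rw [h1] at hlow2
  have hlo : 0 ≤ ⟪z - x, y⟫ - (g z - g x) := by
    have : ⟪y, x - z⟫ = -⟪z - x, y⟫ := by
      rw [real_inner_comm, ← inner_neg_left]; congr 1; abel
    linarith [hlow2, this.symm.le, this.le]
  have hhi : ⟪z - x, y⟫ - (g z - g x) ≤ ⟪z - x, y - y₀⟫ := by
    have h3 : ⟪y₀, z - x⟫ = ⟪z - x, y₀⟫ := real_inner_comm _ _
    rw [inner_sub_right]
    linarith [hup2, h3.le, h3.ge]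
  have hmonoz := aux_mono hΩo hΩc hK hg hlower hx h2
  rw [h1] at hmonoz
  have hcs : ⟪y - y₀, z - x⟫ ≤ ‖y - y₀‖ * ‖z - x‖ := real_inner_le_norm _ _
  have hzx : K * ‖z - x‖ ^ 2 ≤ ‖y - y₀‖ * ‖z - x‖ := le_trans hmonoz hcs
  have hnzx : ‖z - x‖ ≤ K⁻¹ * ‖y - y₀‖ := by
    rcases eq_or_lt_of_le (norm_nonneg (z - x)) with h | h
    · rw [← h]; positivity
    · have h4 : K * ‖z - x‖ ≤ ‖y - y₀‖ := by nlinarith [hzx, h]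
      calc ‖z - x‖ = K⁻¹ * (K * ‖z - x‖) := by field_simp
        _ ≤ K⁻¹ * ‖y - y₀‖ := mul_le_mul_of_nonneg_left h4 (inv_pos.mpr hK).le
  have hcs2 : ⟪z - x, y - y₀⟫ ≤ ‖z - x‖ * ‖y - y₀‖ := real_inner_le_norm _ _
  rw [hE, abs_le]
  constructor
  · linarith [sq_nonneg ‖y - y₀‖, inv_pos.mpr hK, hlo,
      mul_nonneg (inv_pos.mpr hK).le (sq_nonneg ‖y - y₀‖)]
  · have : ‖z - x‖ * ‖y - y₀‖ ≤ K⁻¹ * ‖y - y₀‖ ^ 2 := by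
      nlinarith [norm_nonneg (y - y₀), hnzx]
    linarith
end main

section main2
variable {Ω : Set E} (hΩo : IsOpen Ω) (hΩc : Convex ℝ Ω) (hne : Ω.Nonempty)
  {g : E → ℝ} {K : ℝ} (hK : 0 < K) (hg : ContDiffOn ℝ 2 g Ω)
  (hlower : ∀ x ∈ Ω, ∀ v : E, K * ‖v‖ ^ 2 ≤ ⟪fderiv ℝ (gradient g) x v, v⟫)
  {gstar : E → ℝ}
  (hgstar : ∀ y, gstar y = ⨆ x : Ω, (⟪(x : E), y⟫ - g x))
include hΩo hΩc hne hK hg hlower hgstar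

theorem aux_hasGradientAt_gstar {x : E} (hx : x ∈ Ω) :
    HasGradientAt gstar x (gradient g x) := by
  rw [hasGradientAt_iff_hasFDerivAt]
  apply HasFDerivAt.of_isLittleO
  rw [Asymptotics.isLittleO_iff]
  intro c hc
  have hquad := aux_quad hΩo hΩc hne hK hg hlower hgstar hx
  have hball : ∀ᶠ y in 𝓝 (gradient g x), ‖y - gradient g x‖ < c * K := by
    have hm : Metric.ball (gradient g x) (c * K) ∈ 𝓝 (gradient g x) :=
      Metric.ball_mem_nhds _ (by positivity)
    filter_upwards [hm] with y hy
    rwa [Metric.mem_ball, dist_eq_norm] at hy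
  filter_upwards [hquad, hball] with y h1 h2
  have ht : (InnerProductSpace.toDual ℝ E) x (y - gradient g x) = ⟪x, y - gradient g x⟫ := rfl
  rw [ht, Real.norm_eq_abs]
  calc |gstar y - gstar (gradient g x) - ⟪x, y - gradient g x⟫|
      ≤ K⁻¹ * ‖y - gradient g x‖ ^ 2 := h1
    _ ≤ c * ‖y - gradient g x‖ := by
        rw [sq]
        rcases eq_or_lt_of_le (norm_nonneg (y - gradient g x)) with h | h
        · rw [← h]; simp
        · have := mul_le_mul_of_nonneg_right h2.le (norm_nonneg (y - gradient g x))
          calc K⁻¹ * (‖y - gradient g x‖ * ‖y - gradient g x‖)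
              ≤ K⁻¹ * (c * K * ‖y - gradient g x‖) :=
                mul_le_mul_of_nonneg_left this (inv_pos.mpr hK).le
            _ = c * ‖y - gradient g x‖ := by field_simp
end main2

theorem aux_second (hΩo : IsOpen Ω) (hΩc : Convex ℝ Ω) (hne : Ω.Nonempty)
    {g : E → ℝ} {K : ℝ} (hK : 0 < K) (hg : ContDiffOn ℝ 2 g Ω)
    (hlower : ∀ x ∈ Ω, ∀ v : E, K * ‖v‖ ^ 2 ≤ ⟪fderiv ℝ (gradient g) x v, v⟫)
    {gstar : E → ℝ}
    (hgstar : ∀ y, gstar y = ⨆ x : Ω, (⟪(x : E), y⟫ - g x))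
    {x : E} (hx : x ∈ Ω) :
    ∃ Be : E ≃L[ℝ] E, (Be : E →L[ℝ] E) = fderiv ℝ (gradient g) x ∧
      HasFDerivAt (gradient gstar) (Be.symm : E →L[ℝ] E) (gradient g x) := by
  obtain ⟨Be, hBe⟩ := aux_equiv hK (fderiv ℝ (gradient g) x) (hlower x hx)
  have hstrict : HasStrictFDerivAt (gradient g) (Be : E →L[ℝ] E) x := by
    rw [hBe]
    exact (aux_contDiffAt_grad hΩo hg hx).hasStrictFDerivAt one_ne_zero
  set finv := hstrict.localInverse (gradient g) Be x with hfinv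
  have hev1 : ∀ᶠ y in 𝓝 (gradient g x), gradient g (finv y) = y :=
    hstrict.eventually_right_inverse
  have hfx : finv (gradient g x) = x := hstrict.localInverse_apply_image
  have hev2 : ∀ᶠ y in 𝓝 (gradient g x), finv y ∈ Ω := by
    have hc : ContinuousAt finv (gradient g x) := hstrict.localInverse_continuousAt
    have := hc.preimage_mem_nhds (hΩo.mem_nhds (by rw [hfx]; exact hx))
    filter_upwards [this] with y hy using hy
  have hev : gradient gstar =ᶠ[𝓝 (gradient g x)] finv := by
    filter_upwards [hev1, hev2] with y h1 h2
    have := aux_hasGradientAt_gstar hΩo hΩc hne hK hg hlower hgstar h2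
    rw [h1] at this
    exact this.gradient
  exact ⟨Be, hBe, hstrict.to_localInverse.hasFDerivAt.congr_of_eventuallyEq hev⟩

theorem aux_final (hΩo : IsOpen Ω) (hΩc : Convex ℝ Ω) (hne : Ω.Nonempty)
    (g : E → ℝ) (K : ℝ) (hK : 0 < K) (hg : ContDiffOn ℝ 2 g Ω)
    (hlower : ∀ x ∈ Ω, ∀ v : E, K * ‖v‖ ^ 2 ≤ ⟪fderiv ℝ (gradient g) x v, v⟫)
    (x₀ : E) (hx₀ : x₀ ∈ Ω) (gstar : E → ℝ)
    (hgstar : ∀ y, gstar y = ⨆ x : Ω, (⟪(x : E), y⟫ - g x)) :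
    (∃ A : E →L[ℝ] E,
      HasFDerivAt (gradient gstar) A (gradient g x₀) ∧
      A.comp (fderiv ℝ (gradient g) x₀) = ContinuousLinearMap.id ℝ _ ∧
      (fderiv ℝ (gradient g) x₀).comp A = ContinuousLinearMap.id ℝ _) ∧
    (∀ x ∈ Ω, ∀ v : E,
      ⟪fderiv ℝ (gradient gstar) (gradient g x) v, v⟫ ≤ K⁻¹ * ‖v‖ ^ 2) := by
  constructor
  · obtain ⟨Be, hBe, hfd⟩ := aux_second hΩo hΩc hne hK hg hlower hgstar hx₀
    refine ⟨(Be.symm : E →L[ℝ] E), hfd, ?_, ?_⟩ <;>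
      · rw [← hBe]; ext v; simp
  · intro x hx v
    obtain ⟨Be, hBe, hfd⟩ := aux_second hΩo hΩc hne hK hg hlower hgstar hx
    rw [hfd.fderiv]
    set w := (Be.symm : E →L[ℝ] E) v with hw
    have hv : (Be : E →L[ℝ] E) w = v := by rw [hw]; simp
    have hlB : K * ‖w‖ ^ 2 ≤ ⟪(Be : E →L[ℝ] E) w, w⟫ := by
      rw [hBe]; exact hlower x hx w
    have hcs : ⟪(Be : E →L[ℝ] E) w, w⟫ ≤ ‖(Be : E →L[ℝ] E) w‖ * ‖w‖ := real_inner_le_norm _ _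
    have hvw : ‖(Be : E →L[ℝ] E) w‖ = ‖v‖ := by rw [hv]
    have hwb : ‖w‖ ≤ K⁻¹ * ‖v‖ := by
      rcases eq_or_lt_of_le (norm_nonneg w) with h | h
      · rw [← h]; positivity
      · have h4 : K * ‖w‖ ≤ ‖v‖ := by nlinarith [hlB, hcs, hvw, h]
        calc ‖w‖ = K⁻¹ * (K * ‖w‖) := by field_simp
          _ ≤ K⁻¹ * ‖v‖ := mul_le_mul_of_nonneg_left h4 (inv_pos.mpr hK).le
    have h5 : ⟪w, v⟫ ≤ ‖v‖ * ‖w‖ := by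
      rw [real_inner_comm]
      exact real_inner_le_norm v w
    show ⟪w, v⟫ ≤ K⁻¹ * ‖v‖ ^ 2
    nlinarith [norm_nonneg v, norm_nonneg w, hwb, h5]

/-- If `g` is a uniformly convex `C²` function (`D²g ≥ K·I`, `K > 0`) on a
convex open set `Ω`, then its Legendre transform `g*` is twice differentiable
at `ȳ₀ = Dg(x₀)` with `D²g*(ȳ₀) = (D²g(x₀))⁻¹`, and `D²g* ≤ K⁻¹·I` on the
image of `Dg`. -/
theorem stmt4 {n : ℕ} {Ω : Set (EuclideanSpace ℝ (Fin n))}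
    (hΩo : IsOpen Ω) (hΩc : Convex ℝ Ω) (hne : Ω.Nonempty)
    (g : EuclideanSpace ℝ (Fin n) → ℝ) (K : ℝ) (hK : 0 < K)
    (hg : ContDiffOn ℝ 2 g Ω)
    (hlower : ∀ x ∈ Ω, ∀ v : EuclideanSpace ℝ (Fin n),
      K * ‖v‖ ^ 2 ≤ ⟪fderiv ℝ (gradient g) x v, v⟫)
    (x₀ : EuclideanSpace ℝ (Fin n)) (hx₀ : x₀ ∈ Ω)
    (gstar : EuclideanSpace ℝ (Fin n) → ℝ)
    (hgstar : ∀ y, gstar y = ⨆ x : Ω, (⟪(x : EuclideanSpace ℝ (Fin n)), y⟫ - g x)) :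
    (∃ A : EuclideanSpace ℝ (Fin n) →L[ℝ] EuclideanSpace ℝ (Fin n),
      HasFDerivAt (gradient gstar) A (gradient g x₀) ∧
      A.comp (fderiv ℝ (gradient g) x₀) = ContinuousLinearMap.id ℝ _ ∧
      (fderiv ℝ (gradient g) x₀).comp A = ContinuousLinearMap.id ℝ _) ∧
    (∀ x ∈ Ω, ∀ v : EuclideanSpace ℝ (Fin n),
      ⟪fderiv ℝ (gradient gstar) (gradient g x) v, v⟫ ≤ K⁻¹ * ‖v‖ ^ 2) :=
  aux_final hΩo hΩc hne g K hK hg hlower x₀ hx₀ gstar hgstar
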